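/- Additive-multiplicative spectral bound: if C consists of the columns of A whose ridge leverage scores are kept by the deterministic thresholding algorithm, so that the sum of the ridge leverage scores of the discarded columns is less than ε, then (1−ε) A Aᵀ − (ε/k)‖A − A_k‖_F² I ⪯ C Cᵀ ⪯ A Aᵀ. -/

import Mathlib

open Matrix BigOperators Finset

noncomputable section

def frobSq {m n : Type*} [Fintype m] [Fintype n] (A : Matrix m n ℝ) : ℝ :=
  ∑ i, ∑ j, (A i j) ^ 2

def loewnerLE {n : Type*} [Fintype n] (M N : Matrix n n ℝ) : Prop :=
  (N - M).PosSemidef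

lemma psd_quad_le_trace {n : Type*} [Fintype n] [DecidableEq n]
    (X : Matrix n n ℝ) (hX : X.PosSemidef) (v : n → ℝ) :
    v ⬝ᵥ (X *ᵥ v) ≤ X.trace * (v ⬝ᵥ v) := by
  obtain ⟨Y, rfl⟩ : ∃ Y : Matrix n n ℝ, X = Yᴴ * Y := by
    open scoped MatrixOrder in exact CStarAlgebra.nonneg_iff_eq_star_mul_self.mp hX.nonneg
  have hYt : Yᴴ = Yᵀ := Matrix.conjTranspose_eq_transpose_of_trivial Y
  rw [hYt]
  have h1 : v ⬝ᵥ ((Yᵀ * Y) *ᵥ v) = (Y *ᵥ v) ⬝ᵥ (Y *ᵥ v) := by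
    rw [← Matrix.mulVec_mulVec, Matrix.dotProduct_mulVec, Matrix.vecMul_transpose]
  have h2 : (Yᵀ * Y).trace = ∑ i, ∑ j, (Y i j) ^ 2 := by
    rw [Matrix.trace]
    simp only [Matrix.diag, Matrix.mul_apply, Matrix.transpose_apply]
    rw [Finset.sum_comm]
    simp [sq]
  rw [h1, h2]
  have : (Y *ᵥ v) ⬝ᵥ (Y *ᵥ v) = ∑ i, (∑ j, Y i j * v j) ^ 2 := by
    simp [dotProduct, Matrix.mulVec, sq]
  rw [this, Finset.sum_mul]
  apply Finset.sum_le_sum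
  intro i _
  calc (∑ j, Y i j * v j) ^ 2 ≤ (∑ j, (Y i j) ^ 2) * ∑ j, (v j) ^ 2 :=
        Finset.sum_mul_sq_le_sq_mul_sq _ _ _
    _ = (∑ j, (Y i j) ^ 2) * (v ⬝ᵥ v) := by simp [dotProduct, sq]

lemma psd_smul_one_sub_of_trace_lt {n : Type*} [Fintype n] [DecidableEq n]
    (X : Matrix n n ℝ) (hX : X.PosSemidef) {ε : ℝ} (h : X.trace < ε) :
    (ε • (1 : Matrix n n ℝ) - X).PosSemidef := by
  refine Matrix.PosSemidef.of_dotProduct_mulVec_nonneg ?_ ?_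
  · refine Matrix.IsHermitian.sub ?_ hX.1
    unfold Matrix.IsHermitian
    ext i j
    simp [Matrix.conjTranspose_apply, Matrix.one_apply, eq_comm]
  · intro v
    have hq := psd_quad_le_trace X hX v
    have hvv : 0 ≤ v ⬝ᵥ v := Finset.sum_nonneg fun i _ => mul_self_nonneg _
    simp only [Matrix.sub_mulVec, dotProduct_sub, Matrix.smul_mulVec, Matrix.one_mulVec,
      dotProduct_smul, smul_eq_mul, star_trivial]
    nlinarith [hq, hvv]

set_option maxHeartbeats 1000000 in
theorem drls_spectral_bound {n d k : ℕ} (hk : 1 ≤ k)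
    (A Ak : Matrix (Fin n) (Fin d) ℝ)
    (hrank : k ≤ A.rank)
    (hAk_rank : Ak.rank ≤ k)
    (hAk_opt : ∀ B : Matrix (Fin n) (Fin d) ℝ, B.rank ≤ k →
      frobSq (A - Ak) ≤ frobSq (A - B))
    (lam : ℝ) (hlam : lam = 1 / (k : ℝ) * frobSq (A - Ak)) (hlam_pos : 0 < lam)
    (ε : ℝ) (Θ : Finset (Fin d))
    (hdiscard : ∑ i ∈ Θᶜ, ((Aᵀ * (A * Aᵀ + lam • 1)⁻¹ * A : Matrix (Fin d) (Fin d) ℝ)) i i < ε)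
    (C : Matrix (Fin n) {x // x ∈ Θ} ℝ) (hC : ∀ i j, C i j = A i (j : Fin d)) :
    loewnerLE ((1 - ε) • (A * Aᵀ) - (ε * lam) • 1) (C * Cᵀ) ∧
      loewnerLE (C * Cᵀ) (A * Aᵀ) := by
  classical
  set M : Matrix (Fin n) (Fin n) ℝ := A * Aᵀ + lam • 1 with hM
  -- B : submatrix of discarded columns
  set B : Matrix (Fin n) {x // x ∈ Θᶜ} ℝ := fun i j => A i (j : Fin d) with hB
  -- split A Aᵀ = C Cᵀ + B Bᵀ
  have hsplit : A * Aᵀ = C * Cᵀ + B * Bᵀ := by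
    ext i j
    simp only [Matrix.add_apply, Matrix.mul_apply, Matrix.transpose_apply, hC]
    simp only [hB]
    rw [← Finset.sum_subtype Θ (fun x => Iff.rfl) (fun l => A i l * A j l),
        ← Finset.sum_subtype Θᶜ (fun x => Iff.rfl) (fun l => A i l * A j l),
        Finset.sum_add_sum_compl]
  have hBBt : (B * Bᵀ).PosSemidef := by
    have := Matrix.posSemidef_self_mul_conjTranspose B
    rwa [Matrix.conjTranspose_eq_transpose_of_trivial] at this
  have hAAt : (A * Aᵀ).PosSemidef := by
    have := Matrix.posSemidef_self_mul_conjTranspose A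
    rwa [Matrix.conjTranspose_eq_transpose_of_trivial] at this
  -- M is positive definite
  have hlamI : (lam • (1 : Matrix (Fin n) (Fin n) ℝ)).PosDef := by
    have : lam • (1 : Matrix (Fin n) (Fin n) ℝ) = Matrix.diagonal (fun _ => lam) := by
      ext i j; simp [Matrix.one_apply, Matrix.diagonal_apply]
    rw [this]
    exact Matrix.posDef_diagonal_iff.mpr fun _ => hlam_pos
  have hMpd : M.PosDef := Matrix.PosDef.posSemidef_add hAAt hlamI
  have hMpsd : M.PosSemidef := hMpd.posSemidef
  -- square root of M
  open scoped MatrixOrder in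
  set S : Matrix (Fin n) (Fin n) ℝ := CFC.sqrt M with hS
  have hSpsd : S.PosSemidef := by
    open scoped MatrixOrder in exact (CFC.sqrt_nonneg M).posSemidef
  have hSS : S * S = M := by
    open scoped MatrixOrder in exact CFC.sqrt_mul_sqrt_self M hMpsd.nonneg
  have hSt : Sᵀ = S := by
    rw [← Matrix.conjTranspose_eq_transpose_of_trivial]; exact hSpsd.1
  have hdetS : IsUnit S.det := by
    have hdM : (0:ℝ) < M.det := hMpd.det_pos
    have : S.det * S.det = M.det := by rw [← Matrix.det_mul, hSS]
    have hne : S.det ≠ 0 := by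
      intro h; rw [h, mul_zero] at this; exact hdM.ne' this.symm
    exact isUnit_iff_ne_zero.mpr hne
  have hSiS : S⁻¹ * S = 1 := Matrix.nonsing_inv_mul S hdetS
  have hSSi : S * S⁻¹ = 1 := Matrix.mul_nonsing_inv S hdetS
  have hMinv : M⁻¹ = S⁻¹ * S⁻¹ := by rw [← hSS, Matrix.mul_inv_rev]
  have hSit : (S⁻¹)ᵀ = S⁻¹ := by rw [Matrix.transpose_nonsing_inv, hSt]
  -- X = S⁻¹ (B Bᵀ) S⁻¹
  set X : Matrix (Fin n) (Fin n) ℝ := S⁻¹ * (B * Bᵀ) * S⁻¹ with hX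
  have hXpsd : X.PosSemidef := by
    have h := Matrix.posSemidef_self_mul_conjTranspose (S⁻¹ * B)
    rw [Matrix.conjTranspose_eq_transpose_of_trivial, Matrix.transpose_mul, hSit] at h
    have : S⁻¹ * B * (Bᵀ * S⁻¹) = X := by
      rw [hX, ← Matrix.mul_assoc, Matrix.mul_assoc S⁻¹ B Bᵀ]
    rwa [this] at h
  -- trace of X equals the discarded leverage score sum
  have htr : X.trace = ∑ i ∈ Θᶜ, ((Aᵀ * M⁻¹ * A : Matrix (Fin d) (Fin d) ℝ)) i i := by
    have h1 : X.trace = (M⁻¹ * (B * Bᵀ)).trace := by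
      rw [hX, Matrix.trace_mul_comm, ← Matrix.mul_assoc, hMinv]
    have h2 : (M⁻¹ * (B * Bᵀ)).trace = (Bᵀ * (M⁻¹ * B)).trace := by
      rw [← Matrix.mul_assoc, Matrix.trace_mul_comm]
    rw [h1, h2, Matrix.trace]
    rw [show ∑ i ∈ Θᶜ, ((Aᵀ * M⁻¹ * A : Matrix (Fin d) (Fin d) ℝ)) i i
        = ∑ i : {x // x ∈ Θᶜ}, ((Aᵀ * M⁻¹ * A : Matrix (Fin d) (Fin d) ℝ)) i i from
      Finset.sum_subtype Θᶜ (fun x => Iff.rfl) _]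
    apply Finset.sum_congr rfl
    intro i _
    simp only [Matrix.diag, Matrix.mul_apply, Matrix.transpose_apply]
    simp only [hB]
    simp only [Finset.mul_sum, Finset.sum_mul]
    rw [Finset.sum_comm]
    apply Finset.sum_congr rfl
    intro a _
    apply Finset.sum_congr rfl
    intro b _
    ring
  have htrlt : X.trace < ε := by rw [htr]; exact hdiscard
  -- key PSD fact: ε M - B Bᵀ is PSD
  have hkey : (ε • M - B * Bᵀ).PosSemidef := by
    have h1 : (ε • (1 : Matrix (Fin n) (Fin n) ℝ) - X).PosSemidef :=
      psd_smul_one_sub_of_trace_lt X hXpsd htrlt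
    have h2 := h1.mul_mul_conjTranspose_same S
    rw [Matrix.conjTranspose_eq_transpose_of_trivial, hSt] at h2
    have h3 : S * (ε • (1 : Matrix (Fin n) (Fin n) ℝ) - X) * S = ε • M - B * Bᵀ := by
      rw [Matrix.mul_sub, Matrix.sub_mul, Matrix.mul_smul, Matrix.smul_mul, mul_one, hSS, hX]
      congr 1
      rw [← Matrix.mul_assoc, ← Matrix.mul_assoc, hSSi, Matrix.one_mul, Matrix.mul_assoc, hSiS,
        Matrix.mul_one]
    rwa [h3] at h2
  constructor
  · unfold loewnerLE
    have heq : C * Cᵀ - ((1 - ε) • (A * Aᵀ) - (ε * lam) • 1) = ε • M - B * Bᵀ := by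
      have hC' : C * Cᵀ = A * Aᵀ - B * Bᵀ := by rw [hsplit]; abel
      rw [hC', hM]
      rw [smul_add, smul_smul]
      ext i j
      simp only [Matrix.sub_apply, Matrix.add_apply, Matrix.smul_apply, smul_eq_mul]
      ring
    rw [heq]; exact hkey
  · unfold loewnerLE
    have : A * Aᵀ - C * Cᵀ = B * Bᵀ := by rw [hsplit]; abel
    rw [this]; exact hBBt
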